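/- Let A be a real n×n matrix, G a real n×r matrix, H₁ a real s×n matrix, γ_f > 0 and μ > 0 scalars, and P a symmetric positive definite real n×n matrix with AᵀP + PA ≼ −2μP. Let e : ℝ → ℝⁿ be differentiable and f : ℝ → ℝʳ satisfy, for all t ≥ 0, e′(t) = A·e(t) + G·f(t) and ‖f(t)‖ ≤ γ_f·‖H₁·e(t)‖. Set c₁ = μ − μ⁻¹·γ_f²·λ_min(P)⁻¹·‖P‖·‖G‖²·‖H₁‖², where λ_min(P) is the smallest eigenvalue of P. Then for all t ≥ 0: ‖e(t)‖² ≤ λ_min(P)⁻¹·(e(0)ᵀP·e(0))·exp(−c₁·t). -/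

import Mathlib

open Matrix

/-- The spectral (operator 2-) norm of a real matrix, i.e. the operator norm of
the induced linear map between Euclidean spaces. -/
noncomputable def specNorm {m n : ℕ} (M : Matrix (Fin m) (Fin n) ℝ) : ℝ :=
  ‖LinearMap.toContinuousLinearMap (Matrix.toEuclideanLin M)‖

namespace Stmt9Aux

lemma norm_symm_equiv {m : ℕ} (v : Fin m → ℝ) :
    ‖(WithLp.equiv 2 (Fin m → ℝ)).symm v‖ = Real.sqrt (∑ i, v i ^ 2) := by
  rw [EuclideanSpace.norm_eq]
  congr 1
  refine Finset.sum_congr rfl fun i _ => ?_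
  simp [Real.norm_eq_abs, sq_abs]

lemma specNorm_nonneg {m k : ℕ} (M : Matrix (Fin m) (Fin k) ℝ) : 0 ≤ specNorm M :=
  norm_nonneg _

lemma mulVec_norm_le {m k : ℕ} (M : Matrix (Fin m) (Fin k) ℝ) (x : Fin k → ℝ) :
    Real.sqrt (∑ i, M.mulVec x i ^ 2) ≤ specNorm M * Real.sqrt (∑ i, x i ^ 2) := by
  have h := (LinearMap.toContinuousLinearMap (Matrix.toEuclideanLin M)).le_opNorm
      ((WithLp.equiv 2 (Fin k → ℝ)).symm x)
  have key : (LinearMap.toContinuousLinearMap (Matrix.toEuclideanLin M))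
        ((WithLp.equiv 2 (Fin k → ℝ)).symm x)
      = (WithLp.equiv 2 (Fin m → ℝ)).symm (M.mulVec x) := by
    rfl
  rw [key, norm_symm_equiv, norm_symm_equiv] at h
  exact h

lemma dot_le {m : ℕ} (x y : Fin m → ℝ) :
    x ⬝ᵥ y ≤ Real.sqrt (∑ i, x i ^ 2) * Real.sqrt (∑ i, y i ^ 2) := by
  have h := real_inner_le_norm ((WithLp.equiv 2 (Fin m → ℝ)).symm x)
      ((WithLp.equiv 2 (Fin m → ℝ)).symm y)
  rw [norm_symm_equiv, norm_symm_equiv] at h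
  refine le_trans (le_of_eq ?_) h
  simp [PiLp.inner_apply, dotProduct, RCLike.inner_apply, mul_comm]

lemma quad_le {m : ℕ} (M : Matrix (Fin m) (Fin m) ℝ) (x : Fin m → ℝ) :
    x ⬝ᵥ M.mulVec x ≤ specNorm M * ∑ i, x i ^ 2 := by
  calc x ⬝ᵥ M.mulVec x ≤ Real.sqrt (∑ i, x i ^ 2) * Real.sqrt (∑ i, M.mulVec x i ^ 2) :=
        dot_le _ _
    _ ≤ Real.sqrt (∑ i, x i ^ 2) * (specNorm M * Real.sqrt (∑ i, x i ^ 2)) := by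
        gcongr
        exact mulVec_norm_le M x
    _ = specNorm M * (Real.sqrt (∑ i, x i ^ 2) * Real.sqrt (∑ i, x i ^ 2)) := by ring
    _ = specNorm M * ∑ i, x i ^ 2 := by
        rw [Real.mul_self_sqrt (Finset.sum_nonneg fun i _ => sq_nonneg _)]

lemma dot_mulVec_symm {m : ℕ} {S : Matrix (Fin m) (Fin m) ℝ} (hS : Sᵀ = S)
    (a b : Fin m → ℝ) : S.mulVec a ⬝ᵥ b = a ⬝ᵥ S.mulVec b := by
  rw [dotProduct_comm, Matrix.dotProduct_mulVec, ← Matrix.mulVec_transpose, hS,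
    dotProduct_comm]

lemma rayleigh_le {m : ℕ} (P : Matrix (Fin m) (Fin m) ℝ) (hH : P.IsHermitian)
    (x : Fin m → ℝ) :
    (⨅ i, hH.eigenvalues i) * ∑ i, x i ^ 2 ≤ x ⬝ᵥ P.mulVec x := by
  rcases Nat.eq_zero_or_pos m with hm | hm
  · subst hm; simp [dotProduct]
  haveI : Nonempty (Fin m) := ⟨⟨0, hm⟩⟩
  set U : Matrix (Fin m) (Fin m) ℝ := (hH.eigenvectorUnitary : Matrix (Fin m) (Fin m) ℝ)
    with hU
  have hUst : U * star U = 1 := (Matrix.mem_unitaryGroup_iff).mp hH.eigenvectorUnitary.2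
  have hsU : star U = Uᵀ := by
    rw [Matrix.star_eq_conjTranspose, Matrix.conjTranspose_eq_transpose_of_trivial]
  set y := Uᵀ.mulVec x with hy
  have hxPx : x ⬝ᵥ P.mulVec x = ∑ i, hH.eigenvalues i * y i ^ 2 := by
    conv_lhs => rw [hH.spectral_theorem, Unitary.conjStarAlgAut_apply]
    rw [← hU, hsU, ← Matrix.mulVec_mulVec, ← Matrix.mulVec_mulVec, Matrix.dotProduct_mulVec,
      ← Matrix.mulVec_transpose, ← hy]
    simp only [Matrix.mulVec_diagonal, dotProduct, Function.comp_apply,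
      RCLike.ofReal_real_eq_id, id_eq]
    exact Finset.sum_congr rfl fun i _ => by ring
  have hyy : ∑ i, y i ^ 2 = ∑ i, x i ^ 2 := by
    have h1 : y ⬝ᵥ y = x ⬝ᵥ x := by
      rw [hy, ← hsU, Matrix.dotProduct_mulVec, ← Matrix.mulVec_transpose, hsU,
        Matrix.transpose_transpose, Matrix.mulVec_mulVec, ← hsU, hUst, Matrix.one_mulVec]
    simpa [dotProduct, sq] using h1
  rw [hxPx, ← hyy, Finset.mul_sum]
  refine Finset.sum_le_sum fun i _ => ?_
  exact mul_le_mul_of_nonneg_right (ciInf_le (Set.Finite.bddBelow (Set.finite_range _)) i)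
    (sq_nonneg _)

open scoped MatrixOrder in
lemma quadPP_le {m : ℕ} {P : Matrix (Fin m) (Fin m) ℝ} (hP : P.PosSemidef) (x : Fin m → ℝ) :
    x ⬝ᵥ (P * P).mulVec x ≤ specNorm P * (x ⬝ᵥ P.mulVec x) := by
  set S := CFC.sqrt P with hSdef
  have hSS : S * S = P := CFC.sqrt_mul_sqrt_self P hP.nonneg
  have hSsymm : Sᵀ = S := by
    have h := (CFC.sqrt_nonneg P).posSemidef.1
    rwa [Matrix.IsHermitian, Matrix.conjTranspose_eq_transpose_of_trivial] at h
  have key : x ⬝ᵥ (P * P).mulVec x = (S.mulVec x) ⬝ᵥ P.mulVec (S.mulVec x) := by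
    rw [dot_mulVec_symm hSsymm, ← hSS]
    simp only [Matrix.mulVec_mulVec, mul_assoc]
  rw [key]
  have h1 := quad_le P (S.mulVec x)
  have h2 : ∑ i, S.mulVec x i ^ 2 = x ⬝ᵥ P.mulVec x := by
    have h3 : S.mulVec x ⬝ᵥ S.mulVec x = x ⬝ᵥ P.mulVec x := by
      rw [dot_mulVec_symm hSsymm, Matrix.mulVec_mulVec, hSS]
    simpa [dotProduct, sq] using h3
  rw [h2] at h1; exact h1

lemma gronwall_simple {V V' : ℝ → ℝ} {K : ℝ}
    (hd : ∀ t, HasDerivAt V (V' t) t)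
    (hb : ∀ t ≥ (0:ℝ), V' t ≤ K * V t) :
    ∀ t ≥ (0:ℝ), V t ≤ V 0 * Real.exp (K * t) := by
  intro t ht
  have h := le_gronwallBound_of_liminf_deriv_right_le (f := V) (f' := V') (a := 0) (b := t)
    (δ := V 0) (K := K) (ε := 0)
    (fun x _ => (hd x).continuousAt.continuousWithinAt)
    (fun x _ r hr => ((hd x).hasDerivWithinAt.liminf_right_slope_le hr).mono
      (fun z hz => by simpa [slope_def_field, div_eq_inv_mul] using hz))
    le_rfl
    (fun x hx => by simpa using hb x hx.1)
  have h2 := h t ⟨ht, le_rfl⟩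
  rwa [sub_zero, gronwallBound_ε0] at h2

end Stmt9Aux

open Stmt9Aux in
theorem stmt_9 (n r s : ℕ) (hn : 0 < n)
    (A : Matrix (Fin n) (Fin n) ℝ) (G : Matrix (Fin n) (Fin r) ℝ)
    (H₁ : Matrix (Fin s) (Fin n) ℝ)
    (γf μ : ℝ) (hγf : 0 < γf) (hμ : 0 < μ)
    (P : Matrix (Fin n) (Fin n) ℝ) (hPsymm : P.IsSymm) (hP : P.PosDef)
    (hLyap : ((-(2 * μ)) • P - (Aᵀ * P + P * A)).PosSemidef)
    (e : ℝ → Fin n → ℝ) (f : ℝ → Fin r → ℝ)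
    (he : Differentiable ℝ e)
    (hode : ∀ t ≥ (0 : ℝ), deriv e t = A.mulVec (e t) + G.mulVec (f t))
    (hf : ∀ t ≥ (0 : ℝ), Real.sqrt (∑ i, f t i ^ 2) ≤
      γf * Real.sqrt (∑ i, H₁.mulVec (e t) i ^ 2)) :
    ∀ t ≥ (0 : ℝ),
      (∑ i, e t i ^ 2) ≤
        (⨅ i, hP.1.eigenvalues i)⁻¹ * (e 0 ⬝ᵥ P.mulVec (e 0)) *
          Real.exp (-(μ - μ⁻¹ * γf ^ 2 * (⨅ i, hP.1.eigenvalues i)⁻¹ *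
            specNorm P * specNorm G ^ 2 * specNorm H₁ ^ 2) * t) := by
  classical
  haveI : Nonempty (Fin n) := ⟨⟨0, hn⟩⟩
  set lam : ℝ := ⨅ i, hP.1.eigenvalues i with hlam
  have hlampos : 0 < lam := by
    obtain ⟨i, hi⟩ := exists_eq_ciInf_of_finite (f := fun i => hP.1.eigenvalues i)
    rw [hlam, ← hi]
    exact hP.eigenvalues_pos i
  set V : ℝ → ℝ := fun τ => e τ ⬝ᵥ P.mulVec (e τ) with hV
  set V' : ℝ → ℝ := fun τ => 2 * (e τ ⬝ᵥ P.mulVec (deriv e τ)) with hV'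
  have hPsymm' : Pᵀ = P := hPsymm
  -- pointwise derivative of components
  have hcomp : ∀ (τ : ℝ) (i : Fin n), HasDerivAt (fun σ => e σ i) (deriv e τ i) τ := by
    intro τ i
    exact (ContinuousLinearMap.proj (R := ℝ) (φ := fun _ : Fin n => ℝ) i).hasFDerivAt
      |>.comp_hasDerivAt τ (he τ).hasDerivAt
  -- derivative of V
  have hVd : ∀ τ, HasDerivAt V (V' τ) τ := by
    intro τ
    have h0 : HasDerivAt (fun σ => ∑ i, e σ i * ∑ j, P i j * e σ j)
        (∑ i, (deriv e τ i * ∑ j, P i j * e τ j + e τ i * ∑ j, P i j * deriv e τ j)) τ := by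
      refine HasDerivAt.fun_sum fun i _ => ?_
      exact (hcomp τ i).mul (HasDerivAt.fun_sum fun j _ => (hcomp τ j).const_mul (P i j))
    have hfun : V = fun σ => ∑ i, e σ i * ∑ j, P i j * e σ j := by
      funext σ
      simp [hV, dotProduct, Matrix.mulVec]
    have hsum : (∑ i, (deriv e τ i * ∑ j, P i j * e τ j + e τ i * ∑ j, P i j * deriv e τ j))
        = deriv e τ ⬝ᵥ P.mulVec (e τ) + e τ ⬝ᵥ P.mulVec (deriv e τ) := by
      simp [dotProduct, Matrix.mulVec, Finset.sum_add_distrib]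
    have hswap : deriv e τ ⬝ᵥ P.mulVec (e τ) = e τ ⬝ᵥ P.mulVec (deriv e τ) :=
      (dotProduct_comm _ _).trans (dot_mulVec_symm hPsymm' _ _)
    rw [hfun]
    convert h0 using 1
    rw [hsum, hswap, hV']
    ring
  -- bound on derivative
  set specP := specNorm P
  set specG := specNorm G
  set specH := specNorm H₁
  set K : ℝ := -(μ - μ⁻¹ * γf ^ 2 * lam⁻¹ * specP * specG ^ 2 * specH ^ 2) with hK
  have hVnonneg : ∀ τ, 0 ≤ V τ := by
    intro τ
    have h := rayleigh_le P hP.1 (e τ)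
    refine le_trans ?_ h
    exact mul_nonneg hlampos.le (Finset.sum_nonneg fun i _ => sq_nonneg (e τ i))
  have hbound : ∀ τ ≥ (0:ℝ), V' τ ≤ K * V τ := by
    intro τ hτ
    have hV'eq : V' τ = 2 * (e τ ⬝ᵥ P.mulVec (A.mulVec (e τ)))
        + 2 * (e τ ⬝ᵥ P.mulVec (G.mulVec (f τ))) := by
      simp only [hV']
      rw [hode τ hτ, Matrix.mulVec_add, dotProduct_add]
      ring
    -- Lyapunov part
    have hlyap2 : 2 * (e τ ⬝ᵥ P.mulVec (A.mulVec (e τ))) ≤ -(2*μ) * V τ := by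
      have h0 := hLyap.re_dotProduct_nonneg (e τ)
      simp only [RCLike.re_to_real, star_trivial, Matrix.sub_mulVec,
        Matrix.smul_mulVec, dotProduct_sub, dotProduct_smul,
        smul_eq_mul] at h0
      have hAP : e τ ⬝ᵥ (Aᵀ * P + P * A).mulVec (e τ)
          = 2 * (e τ ⬝ᵥ P.mulVec (A.mulVec (e τ))) := by
        rw [Matrix.add_mulVec, dotProduct_add, ← Matrix.mulVec_mulVec,
          ← Matrix.mulVec_mulVec]
        have h1 : e τ ⬝ᵥ Aᵀ.mulVec (P.mulVec (e τ))
            = e τ ⬝ᵥ P.mulVec (A.mulVec (e τ)) := by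
          rw [Matrix.mulVec_transpose, dotProduct_comm, ← Matrix.dotProduct_mulVec,
            dot_mulVec_symm hPsymm']
        rw [h1]; ring
      rw [hAP] at h0
      have : 2 * (e τ ⬝ᵥ P.mulVec (A.mulVec (e τ))) ≤ -(2*μ) * (e τ ⬝ᵥ P.mulVec (e τ)) := by
        linarith
      simpa [hV] using this
    -- the perturbation part
    have hpert : 2 * (e τ ⬝ᵥ P.mulVec (G.mulVec (f τ)))
        ≤ (μ + μ⁻¹ * (γf^2 * specG^2 * specH^2) * (specP * lam⁻¹)) * V τ := by
      have hswp : e τ ⬝ᵥ P.mulVec (G.mulVec (f τ))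
          = (P.mulVec (e τ)) ⬝ᵥ (G.mulVec (f τ)) := (dot_mulVec_symm hPsymm' _ _).symm
      have hcs : (P.mulVec (e τ)) ⬝ᵥ (G.mulVec (f τ))
          ≤ Real.sqrt (∑ i, P.mulVec (e τ) i ^ 2) * Real.sqrt (∑ i, G.mulVec (f τ) i ^ 2) :=
        dot_le _ _
      have hPe : Real.sqrt (∑ i, P.mulVec (e τ) i ^ 2) ≤ Real.sqrt (specP * V τ) := by
        apply Real.sqrt_le_sqrt
        have h2 : P.mulVec (e τ) ⬝ᵥ P.mulVec (e τ) = e τ ⬝ᵥ (P * P).mulVec (e τ) := by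
          rw [dot_mulVec_symm hPsymm', Matrix.mulVec_mulVec]
        have h1 : ∑ i, P.mulVec (e τ) i ^ 2 = e τ ⬝ᵥ (P * P).mulVec (e τ) := by
          simpa [dotProduct, sq] using h2
        rw [h1]
        exact quadPP_le hP.posSemidef (e τ)
      have hGf : Real.sqrt (∑ i, G.mulVec (f τ) i ^ 2)
          ≤ specG * (γf * (specH * Real.sqrt (lam⁻¹ * V τ))) := by
        refine (mulVec_norm_le G (f τ)).trans ?_
        have h3 : Real.sqrt (∑ i, e τ i ^ 2) ≤ Real.sqrt (lam⁻¹ * V τ) := by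
          apply Real.sqrt_le_sqrt
          rw [le_inv_mul_iff₀ hlampos]
          exact rayleigh_le P hP.1 (e τ)
        have h2 : Real.sqrt (∑ i, H₁.mulVec (e τ) i ^ 2)
            ≤ specH * Real.sqrt (lam⁻¹ * V τ) :=
          (mulVec_norm_le H₁ (e τ)).trans
            (mul_le_mul_of_nonneg_left h3 (specNorm_nonneg _))
        have h1 : Real.sqrt (∑ i, f τ i ^ 2)
            ≤ γf * (specH * Real.sqrt (lam⁻¹ * V τ)) :=
          (hf τ hτ).trans (mul_le_mul_of_nonneg_left h2 hγf.le)
        exact mul_le_mul_of_nonneg_left h1 (specNorm_nonneg _)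
      -- combine
      set c : ℝ := γf * specG * specH with hc
      have hc0 : 0 ≤ c := by
        rw [hc]
        exact mul_nonneg (mul_nonneg hγf.le (specNorm_nonneg _)) (specNorm_nonneg _)
      set q : ℝ := Real.sqrt (specP * lam⁻¹) with hq
      have hq0 : 0 ≤ q := Real.sqrt_nonneg _
      have hq2 : q ^ 2 = specP * lam⁻¹ :=
        Real.sq_sqrt (mul_nonneg (specNorm_nonneg _) (inv_nonneg.mpr hlampos.le))
      have hsqrtmul : Real.sqrt (specP * V τ) * Real.sqrt (lam⁻¹ * V τ) = q * V τ := by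
        rw [hq, ← Real.sqrt_mul (mul_nonneg (specNorm_nonneg _) (hVnonneg τ)),
          show specP * V τ * (lam⁻¹ * V τ) = specP * lam⁻¹ * (V τ * V τ) by ring,
          Real.sqrt_mul (mul_nonneg (specNorm_nonneg _) (inv_nonneg.mpr hlampos.le)),
          Real.sqrt_mul_self (hVnonneg τ)]
      have hPGf : (P.mulVec (e τ)) ⬝ᵥ (G.mulVec (f τ)) ≤ c * (q * V τ) := by
        calc (P.mulVec (e τ)) ⬝ᵥ (G.mulVec (f τ))
            ≤ Real.sqrt (∑ i, P.mulVec (e τ) i ^ 2) * Real.sqrt (∑ i, G.mulVec (f τ) i ^ 2) :=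
              hcs
          _ ≤ Real.sqrt (specP * V τ) * (specG * (γf * (specH * Real.sqrt (lam⁻¹ * V τ)))) :=
              mul_le_mul hPe hGf (Real.sqrt_nonneg _) (Real.sqrt_nonneg _)
          _ = c * (Real.sqrt (specP * V τ) * Real.sqrt (lam⁻¹ * V τ)) := by rw [hc]; ring
          _ = c * (q * V τ) := by rw [hsqrtmul]
      have hyoung : 2 * (c * q) ≤ μ + μ⁻¹ * (c^2 * q^2) := by
        have hμ0 : μ ≠ 0 := hμ.ne'
        have hsq := mul_nonneg (inv_nonneg.mpr hμ.le) (sq_nonneg (μ - c * q))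
        have hexp : μ⁻¹ * (μ - c * q) ^ 2 = μ - 2 * (c * q) + μ⁻¹ * (c ^ 2 * q ^ 2) := by
          field_simp
          ring
        rw [hexp] at hsq
        linarith
      calc 2 * (e τ ⬝ᵥ P.mulVec (G.mulVec (f τ))) = 2 * ((P.mulVec (e τ)) ⬝ᵥ (G.mulVec (f τ))) := by
            rw [hswp]
        _ ≤ 2 * (c * (q * V τ)) := by linarith [hPGf]
        _ = (2 * (c * q)) * V τ := by ring
        _ ≤ (μ + μ⁻¹ * (c^2 * q^2)) * V τ :=
            mul_le_mul_of_nonneg_right hyoung (hVnonneg τ)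
        _ = (μ + μ⁻¹ * (γf^2 * specG^2 * specH^2) * (specP * lam⁻¹)) * V τ := by
            rw [hq2, hc]; ring
    have hKV : K * V τ = -(2*μ) * V τ
        + (μ + μ⁻¹ * (γf^2 * specG^2 * specH^2) * (specP * lam⁻¹)) * V τ := by
      rw [hK]; ring
    rw [hV'eq, hKV]
    exact add_le_add hlyap2 hpert
  -- Gronwall
  intro t ht
  have hgr := gronwall_simple hVd hbound t ht
  have h1 : ∑ i, e t i ^ 2 ≤ lam⁻¹ * V t := by
    rw [le_inv_mul_iff₀ hlampos]
    exact rayleigh_le P hP.1 (e t)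
  calc ∑ i, e t i ^ 2 ≤ lam⁻¹ * V t := h1
    _ ≤ lam⁻¹ * (V 0 * Real.exp (K * t)) :=
        mul_le_mul_of_nonneg_left hgr (inv_nonneg.mpr hlampos.le)
    _ = lam⁻¹ * (e 0 ⬝ᵥ P.mulVec (e 0)) * Real.exp (K * t) := by
        simp only [hV]; ring
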